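/- Let n ∈ ℝ³ \ {0} and D ∈ ℝ, and let P := {a ∈ ℝ³ : ⟨n, a⟩ = D} be the corresponding affine plane. Let g₁, g₂ ∈ ℝ³, c₁, c₂ ∈ ℝ and t₁, t₂ > 0, and suppose det(g₁, g₂, n) ≠ 0, where det(g₁, g₂, n) denotes the determinant of the 3×3 matrix with rows g₁, g₂, n. Let R := {a ∈ ℝ³ : |⟨g₁, a⟩ + c₁| ≤ t₁ and |⟨g₂, a⟩ + c₂| ≤ t₂}. Then the area of P ∩ R equals 4·t₁·t₂·‖n‖ / |det(g₁, g₂, n)|; precisely, for any affine isometry φ : ℝ² → ℝ³ with image P, the two-dimensional Lebesgue measure of φ⁻¹(P ∩ R) equals 4 t₁ t₂ ‖n‖ / |det(g₁, g₂, n)|. -/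

import Mathlib

open MeasureTheory Set
open scoped RealInnerProductSpace

section PlaneSlabAux

/-- Auxiliary: the inner products against the images of the standard basis
recover the inner product against the image of any vector. -/
private lemma plane_slab_aux_key
    (L : EuclideanSpace ℝ (Fin 2) →ₗᵢ[ℝ] EuclideanSpace ℝ (Fin 3))
    (v : EuclideanSpace ℝ (Fin 3)) (y : EuclideanSpace ℝ (Fin 2)) :
    ∑ j, ⟪v, L (EuclideanSpace.single j (1:ℝ))⟫ * y j = ⟪v, L y⟫ := by
  have hy : y = ∑ j, y j • EuclideanSpace.single j (1:ℝ) := by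
    ext k
    simp [EuclideanSpace.single_apply, Fin.sum_univ_two]
    fin_cases k <;> simp
  conv_rhs => rw [hy]
  rw [map_sum, inner_sum]
  congr 1; funext j
  rw [L.map_smul, real_inner_smul_right, mul_comm]

/-- Auxiliary: determinant of `Matrix.toEuclideanLin`. -/
private lemma plane_slab_aux_det_toEuclideanLin (U : Matrix (Fin 2) (Fin 2) ℝ) :
    LinearMap.det (Matrix.toEuclideanLin U) = U.det := by
  rw [show Matrix.toEuclideanLin U =
    ↑(WithLp.linearEquiv 2 ℝ (Fin 2 → ℝ)).symm ∘ₗ (Matrix.toLin' U) ∘ₗ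
      ↑((WithLp.linearEquiv 2 ℝ (Fin 2 → ℝ)).symm).symm from rfl,
    LinearMap.det_conj, LinearMap.det_toLin']

/-- Auxiliary: volume of a box in the Euclidean plane. -/
private lemma plane_slab_aux_volume_box (t₁ t₂ : ℝ) :
    volume {z : EuclideanSpace ℝ (Fin 2) | |z 0| ≤ t₁ ∧ |z 1| ≤ t₂}
      = ENNReal.ofReal (t₁ + t₁) * ENNReal.ofReal (t₂ + t₂) := by
  have hB : {z : EuclideanSpace ℝ (Fin 2) | |z 0| ≤ t₁ ∧ |z 1| ≤ t₂}
      = (MeasurableEquiv.toLp 2 (Fin 2 → ℝ)).symm ⁻¹'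
        (Set.univ.pi fun i => Set.Icc (-(![t₁, t₂] i)) (![t₁, t₂] i)) := by
    ext z
    simp only [Set.mem_setOf_eq, Set.mem_preimage, Set.mem_univ_pi, Fin.forall_fin_two,
      Set.mem_Icc, abs_le]
    rfl
  rw [hB, (EuclideanSpace.volume_preserving_symm_measurableEquiv_toLp (Fin 2)).measure_preimage
    ((MeasurableSet.univ_pi fun i => measurableSet_Icc).nullMeasurableSet)]
  rw [volume_pi_pi]
  rw [Fin.prod_univ_two]
  simp [Real.volume_Icc]

/-- Auxiliary: the determinant identity `|det M| = ‖n‖ |det U|`. -/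
private lemma plane_slab_aux_det (nv : EuclideanSpace ℝ (Fin 3)) (hnv : nv ≠ 0)
    (g₁ g₂ : EuclideanSpace ℝ (Fin 3))
    (M : Matrix (Fin 3) (Fin 3) ℝ)
    (hM : M = Matrix.of ![(fun j => g₁ j), (fun j => g₂ j), (fun j => nv j)])
    (L : EuclideanSpace ℝ (Fin 2) →ₗᵢ[ℝ] EuclideanSpace ℝ (Fin 3))
    (hn : ∀ y, ⟪nv, L y⟫ = 0) :
    |M.det| = ‖nv‖ * |(Matrix.of fun i j =>
      ⟪(![g₁, g₂] : Fin 2 → EuclideanSpace ℝ (Fin 3)) i,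
        L (EuclideanSpace.single j (1:ℝ))⟫ : Matrix (Fin 2) (Fin 2) ℝ).det| := by
  set g : Fin 2 → EuclideanSpace ℝ (Fin 3) := ![g₁, g₂] with hg
  set U : Matrix (Fin 2) (Fin 2) ℝ :=
    Matrix.of fun i j => ⟪g i, L (EuclideanSpace.single j (1:ℝ))⟫ with hU
  set col : Fin 3 → EuclideanSpace ℝ (Fin 3) :=
    ![L (EuclideanSpace.single 0 1), L (EuclideanSpace.single 1 1), ‖nv‖⁻¹ • nv] with hcol
  set N : Matrix (Fin 3) (Fin 3) ℝ := Matrix.of fun k j => col j k with hN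
  have hinner : ∀ (x y : EuclideanSpace ℝ (Fin 3)), ⟪x, y⟫ = ∑ k, x k * y k := by
    intro x y; rw [PiLp.inner_apply]; simp [RCLike.inner_apply, mul_comm]
  have hnn : ⟪nv, nv⟫ = ‖nv‖ ^ 2 := real_inner_self_eq_norm_sq nv
  have hnorm : ‖nv‖ ≠ 0 := norm_ne_zero_iff.mpr hnv
  have hMNentry : ∀ i j, (M * N) i j
      = ⟪(![g₁, g₂, nv] : Fin 3 → EuclideanSpace ℝ (Fin 3)) i, col j⟫ := by
    intro i j
    rw [Matrix.mul_apply, hinner]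
    congr 1; funext k
    fin_cases i <;> simp [hM, hN]
  have hLL : ∀ (a b : Fin 2), ⟪L (EuclideanSpace.single a (1:ℝ)), L (EuclideanSpace.single b 1)⟫
      = if a = b then 1 else 0 := by
    intro a b
    rw [L.inner_map_map]
    simp [EuclideanSpace.inner_single_left, EuclideanSpace.single_apply, eq_comm]
  have hc2 : ∀ a : Fin 2, ⟪L (EuclideanSpace.single a (1:ℝ)), ‖nv‖⁻¹ • nv⟫ = 0 := by
    intro a
    rw [real_inner_smul_right, real_inner_comm, hn, mul_zero]
  have hc2' : ∀ a : Fin 2, ⟪(‖nv‖⁻¹ • nv : EuclideanSpace ℝ (Fin 3)),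
      L (EuclideanSpace.single a (1:ℝ))⟫ = 0 := by
    intro a
    rw [real_inner_smul_left, hn, mul_zero]
  have hc22 : ⟪(‖nv‖⁻¹ • nv : EuclideanSpace ℝ (Fin 3)),
      (‖nv‖⁻¹ • nv : EuclideanSpace ℝ (Fin 3))⟫ = 1 := by
    rw [real_inner_smul_left, real_inner_smul_right, hnn]
    field_simp
  have hcc : ∀ j j' : Fin 3, ⟪col j, col j'⟫ = if j = j' then 1 else 0 := by
    intro j j'
    fin_cases j <;> fin_cases j' <;>
      simp only [hcol, Matrix.cons_val_zero, Matrix.cons_val_one, Matrix.head_cons,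
        Matrix.cons_val_two, Matrix.tail_cons] <;>
      norm_num [hLL, hc2, hc2', hc22, Fin.ext_iff,
        (by rw [norm_smul, norm_inv, norm_norm, inv_mul_cancel₀ hnorm] : ‖‖nv‖⁻¹ • nv‖ = 1)]
  have hNtN : N.transpose * N = 1 := by
    ext j j'
    rw [Matrix.mul_apply]
    have e2 := hcc j j'
    rw [hinner] at e2
    rw [show (∑ k, N.transpose j k * N k j') = ∑ k, col j k * col j' k from rfl, e2,
      Matrix.one_apply]
  have hdetN : N.det ^ 2 = 1 := by
    have h := congrArg Matrix.det hNtN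
    rwa [Matrix.det_mul, Matrix.det_transpose, ← sq, Matrix.det_one] at h
  have h00 : (M * N) 0 0 = U 0 0 := by rw [hMNentry]; rfl
  have h01 : (M * N) 0 1 = U 0 1 := by rw [hMNentry]; rfl
  have h10 : (M * N) 1 0 = U 1 0 := by rw [hMNentry]; rfl
  have h11 : (M * N) 1 1 = U 1 1 := by rw [hMNentry]; rfl
  have h20 : (M * N) 2 0 = 0 := by rw [hMNentry]; exact hn _
  have h21 : (M * N) 2 1 = 0 := by rw [hMNentry]; exact hn _
  have h22 : (M * N) 2 2 = ‖nv‖ := by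
    rw [hMNentry]
    show ⟪nv, ‖nv‖⁻¹ • nv⟫ = ‖nv‖
    rw [real_inner_smul_right, hnn]
    field_simp
  have hdetMN : (M * N).det = ‖nv‖ * U.det := by
    rw [Matrix.det_fin_three, h00, h01, h10, h11, h20, h21, h22, Matrix.det_fin_two]
    ring
  have hmain : |M.det| * |N.det| = ‖nv‖ * |U.det| := by
    rw [← abs_mul, ← Matrix.det_mul, hdetMN, abs_mul, abs_of_nonneg (norm_nonneg nv)]
  have habsN : |N.det| = 1 := by
    have h2 : |N.det| ^ 2 = 1 := by rw [← abs_pow, hdetN, abs_one]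
    nlinarith [abs_nonneg N.det]
  rw [habsN, mul_one] at hmain
  exact hmain

end PlaneSlabAux

/-- **Area of the intersection of a plane with a parallelepiped slab**
(cf. [DB_inh_dim], p. 346). The plane `P = {⟨n,a⟩ = D}` meets the region
`R = {|⟨g₁,a⟩ + c₁| ≤ t₁, |⟨g₂,a⟩ + c₂| ≤ t₂}` in a set of area
`4 t₁ t₂ ‖n‖ / |det(g₁,g₂,n)|`, area being measured via any affine isometry
`φ : ℝ² → ℝ³` with image `P`. -/
theorem plane_slab_intersection_area
    (nv : EuclideanSpace ℝ (Fin 3)) (hnv : nv ≠ 0) (D : ℝ)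
    (P : Set (EuclideanSpace ℝ (Fin 3)))
    (hP : P = {x : EuclideanSpace ℝ (Fin 3) | ⟪nv, x⟫ = D})
    (g₁ g₂ : EuclideanSpace ℝ (Fin 3)) (c₁ c₂ t₁ t₂ : ℝ)
    (ht₁ : 0 < t₁) (ht₂ : 0 < t₂)
    (M : Matrix (Fin 3) (Fin 3) ℝ)
    (hM : M = Matrix.of ![(fun j => g₁ j), (fun j => g₂ j), (fun j => nv j)])
    (hdet : M.det ≠ 0)
    (R : Set (EuclideanSpace ℝ (Fin 3)))
    (hR : R = {x : EuclideanSpace ℝ (Fin 3) | |⟪g₁, x⟫ + c₁| ≤ t₁ ∧ |⟪g₂, x⟫ + c₂| ≤ t₂})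
    (φ : EuclideanSpace ℝ (Fin 2) →ᵃⁱ[ℝ] EuclideanSpace ℝ (Fin 3))
    (hφ : Set.range φ = P) :
    volume (φ ⁻¹' (P ∩ R)) = ENNReal.ofReal (4 * t₁ * t₂ * ‖nv‖ / |M.det|) := by
  set L := φ.linearIsometry with hLdef
  have hφL : ∀ y, φ y = L y + φ 0 := by
    intro y
    have h := φ.map_vadd (0 : EuclideanSpace ℝ (Fin 2)) y
    simpa [vadd_eq_add] using h
  have hPmem : ∀ y, ⟪nv, φ y⟫ = D := by
    intro y
    have : φ y ∈ P := hφ ▸ Set.mem_range_self y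
    rw [hP] at this; exact this
  have hn : ∀ y, ⟪nv, L y⟫ = 0 := by
    intro y
    have h1 := hPmem y
    have h0 := hPmem 0
    rw [hφL y, inner_add_right] at h1
    linarith
  set g : Fin 2 → EuclideanSpace ℝ (Fin 3) := ![g₁, g₂] with hg
  set U : Matrix (Fin 2) (Fin 2) ℝ :=
    Matrix.of fun i j => ⟪g i, L (EuclideanSpace.single j (1:ℝ))⟫ with hU
  have hnorm : ‖nv‖ ≠ 0 := norm_ne_zero_iff.mpr hnv
  have habs : |M.det| = ‖nv‖ * |U.det| :=
    plane_slab_aux_det nv hnv g₁ g₂ M hM L hn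
  have hUdet : U.det ≠ 0 := by
    intro h
    apply hdet
    rw [← abs_eq_zero, habs, h, abs_zero, mul_zero]
  set A : EuclideanSpace ℝ (Fin 2) →ₗ[ℝ] EuclideanSpace ℝ (Fin 2) :=
    Matrix.toEuclideanLin U with hA
  have hAdet : LinearMap.det A = U.det := plane_slab_aux_det_toEuclideanLin U
  have hAapp : ∀ (y : EuclideanSpace ℝ (Fin 2)) (i : Fin 2), A y i = ⟪g i, L y⟫ := by
    intro y i
    rw [show A y i = ∑ j, U i j * y j from rfl]
    exact plane_slab_aux_key L (g i) y
  set d : Fin 2 → ℝ := fun i => ⟪g i, φ 0⟫ + (![c₁, c₂] : Fin 2 → ℝ) i with hd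
  set S : Set (EuclideanSpace ℝ (Fin 2)) :=
    {z | |z 0 + d 0| ≤ t₁ ∧ |z 1 + d 1| ≤ t₂} with hS
  have hset : φ ⁻¹' (P ∩ R) = A ⁻¹' S := by
    ext y
    have hyP : φ y ∈ P := hφ ▸ Set.mem_range_self y
    have e : ∀ i : Fin 2, ⟪g i, φ y⟫ = A y i + ⟪g i, φ 0⟫ := by
      intro i
      rw [hφL y, inner_add_right, hAapp]
    have e0 := e 0
    have e1 := e 1
    simp only [hg, Matrix.cons_val_zero, Matrix.cons_val_one, Matrix.head_cons] at e0 e1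
    simp only [Set.mem_preimage, Set.mem_inter_iff, hyP, true_and, hR, Set.mem_setOf_eq,
      hS, e0, e1]
    have d0 : d 0 = ⟪g₁, φ 0⟫ + c₁ := by simp [hd, hg]
    have d1 : d 1 = ⟪g₂, φ 0⟫ + c₂ := by simp [hd, hg]
    rw [d0, d1]
    constructor
    · rintro ⟨h1, h2⟩
      exact ⟨by rw [← add_assoc]; exact h1, by rw [← add_assoc]; exact h2⟩
    · rintro ⟨h1, h2⟩
      exact ⟨by rw [add_assoc]; exact h1, by rw [add_assoc]; exact h2⟩
  set dvec : EuclideanSpace ℝ (Fin 2) := (WithLp.equiv 2 (Fin 2 → ℝ)).symm ![d 0, d 1] with hdvec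
  set B : Set (EuclideanSpace ℝ (Fin 2)) := {z | |z 0| ≤ t₁ ∧ |z 1| ≤ t₂} with hB
  have hSB : S = (fun z => z + dvec) ⁻¹' B := by
    ext z
    have hv0 : (z + dvec) 0 = z 0 + d 0 := rfl
    have hv1 : (z + dvec) 1 = z 1 + d 1 := rfl
    simp only [hS, hB, Set.mem_setOf_eq, Set.mem_preimage, hv0, hv1]
  have hvolB : volume B = ENNReal.ofReal (t₁ + t₁) * ENNReal.ofReal (t₂ + t₂) :=
    plane_slab_aux_volume_box t₁ t₂
  calc volume (φ ⁻¹' (P ∩ R)) = volume (A ⁻¹' S) := by rw [hset]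
    _ = ENNReal.ofReal |(LinearMap.det A)⁻¹| * volume S := by
        rw [Measure.addHaar_preimage_linearMap volume (by rw [hAdet]; exact hUdet) S]
    _ = ENNReal.ofReal |(U.det)⁻¹| * volume B := by
        rw [hAdet, hSB, measure_preimage_add_right]
    _ = ENNReal.ofReal |(U.det)⁻¹| * (ENNReal.ofReal (t₁ + t₁) * ENNReal.ofReal (t₂ + t₂)) := by
        rw [hvolB]
    _ = ENNReal.ofReal (4 * t₁ * t₂ * ‖nv‖ / |M.det|) := by
        rw [← ENNReal.ofReal_mul (by positivity), ← ENNReal.ofReal_mul (abs_nonneg _)]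
        congr 1
        rw [habs, abs_inv]
        have h1 : |U.det| ≠ 0 := abs_ne_zero.mpr hUdet
        field_simp
        ring
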